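/- Let f : ℝ → ℝ be the inverse of h and define L : ℝ → ℝ by L(v) = f(v)². Then L is convex on ℝ. -/

import Mathlib

/-- The change of variables `h(u) = (1/2)·u·√(1+u²) + (1/2)·log(u + √(1+u²))`. -/
noncomputable def h (u : ℝ) : ℝ :=
  (1 / 2) * u * Real.sqrt (1 + u ^ 2) + (1 / 2) * Real.log (u + Real.sqrt (1 + u ^ 2))

lemma one_add_sq_pos (u : ℝ) : (0:ℝ) < 1 + u ^ 2 := by positivity

lemma sqrt_pos' (u : ℝ) : 0 < Real.sqrt (1 + u ^ 2) :=
  Real.sqrt_pos.2 (one_add_sq_pos u)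

lemma sq_sqrt' (u : ℝ) : Real.sqrt (1 + u ^ 2) ^ 2 = 1 + u ^ 2 :=
  Real.sq_sqrt (one_add_sq_pos u).le

lemma add_sqrt_pos (u : ℝ) : 0 < u + Real.sqrt (1 + u ^ 2) := by
  have h1 : |u| < Real.sqrt (1 + u ^ 2) := by
    rw [← Real.sqrt_sq_eq_abs]
    exact Real.sqrt_lt_sqrt (sq_nonneg u) (by linarith)
  have := neg_abs_le u
  linarith

lemma sqrt_hasDerivAt (u : ℝ) :
    HasDerivAt (fun x : ℝ => Real.sqrt (1 + x ^ 2)) (u / Real.sqrt (1 + u ^ 2)) u := by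
  have h1 : HasDerivAt (fun x : ℝ => 1 + x ^ 2) (2 * u) u := by
    simpa using (hasDerivAt_pow 2 u).const_add 1
  have h2 := (Real.hasDerivAt_sqrt (ne_of_gt (one_add_sq_pos u))).comp u h1
  refine h2.congr_deriv ?_
  field_simp

lemma h_hasDerivAt (u : ℝ) : HasDerivAt h (Real.sqrt (1 + u ^ 2)) u := by
  have hs := sqrt_pos' u
  have hsq := sq_sqrt' u
  have hus := add_sqrt_pos u
  have d1 : HasDerivAt (fun x : ℝ => (1 / 2) * x * Real.sqrt (1 + x ^ 2))
      ((1 / 2) * (Real.sqrt (1 + u ^ 2) + u * (u / Real.sqrt (1 + u ^ 2)))) u := by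
    have := ((hasDerivAt_id u).mul (sqrt_hasDerivAt u)).const_mul (1 / 2 : ℝ)
    convert this using 1
    · rfl
    · rfl
    · ext x; simp only [id_eq, Pi.mul_apply]; ring
    · simp only [id_eq, one_mul]
  have d2 : HasDerivAt (fun x : ℝ => (1 / 2) * Real.log (x + Real.sqrt (1 + x ^ 2)))
      ((1 / 2) * ((1 + u / Real.sqrt (1 + u ^ 2)) / (u + Real.sqrt (1 + u ^ 2)))) u := by
    have hin : HasDerivAt (fun x : ℝ => x + Real.sqrt (1 + x ^ 2))
        (1 + u / Real.sqrt (1 + u ^ 2)) u := (hasDerivAt_id u).add (sqrt_hasDerivAt u)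
    exact ((hin.log (ne_of_gt hus)).const_mul (1 / 2 : ℝ))
  have := d1.add d2
  refine this.congr_deriv ?_
  have hsne : Real.sqrt (1 + u ^ 2) ≠ 0 := ne_of_gt hs
  have husne : u + Real.sqrt (1 + u ^ 2) ≠ 0 := ne_of_gt hus
  field_simp
  linear_combination (-(Real.sqrt (1 + u ^ 2)) - u) * hsq

lemma h_strictMono : StrictMono h := by
  apply strictMono_of_deriv_pos
  intro u
  rw [(h_hasDerivAt u).deriv]
  exact sqrt_pos' u

theorem stmt_10 (f : ℝ → ℝ) (hf₁ : Function.LeftInverse f h)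
    (hf₂ : Function.RightInverse f h) :
    ConvexOn ℝ Set.univ (fun v : ℝ => f v ^ 2) := by
  -- f is strictly monotone
  have hfmono : StrictMono f := by
    intro a b hab
    have := h_strictMono.lt_iff_lt (a := f a) (b := f b)
    rw [hf₂ a, hf₂ b] at this
    exact this.1 hab
  -- f is continuous (inverse of an order iso of ℝ)
  have hfc : Continuous f :=
    OrderIso.continuous
      (OrderIso.symm
        { toFun := h
          invFun := f
          left_inv := hf₁
          right_inv := hf₂
          map_rel_iff' := h_strictMono.le_iff_le })
  -- derivative of f
  have hfd : ∀ v : ℝ, HasDerivAt f (Real.sqrt (1 + f v ^ 2))⁻¹ v := fun v =>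
    HasDerivAt.of_local_left_inverse hfc.continuousAt (h_hasDerivAt (f v))
      (ne_of_gt (sqrt_pos' (f v))) (Filter.Eventually.of_forall hf₂)
  -- derivative of L = f²
  have hLd : ∀ v : ℝ, HasDerivAt (fun v : ℝ => f v ^ 2)
      (2 * f v * (Real.sqrt (1 + f v ^ 2))⁻¹) v := by
    intro v
    have := (hfd v).fun_pow 2
    simpa using this
  -- the auxiliary function φ(u) = 2u/√(1+u²) is monotone
  have hφd : ∀ u : ℝ, HasDerivAt (fun u : ℝ => 2 * u * (Real.sqrt (1 + u ^ 2))⁻¹)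
      (2 / (Real.sqrt (1 + u ^ 2) * (1 + u ^ 2))) u := by
    intro u
    have hs := sqrt_pos' u
    have hsq := sq_sqrt' u
    have hsne : Real.sqrt (1 + u ^ 2) ≠ 0 := ne_of_gt hs
    have := (((hasDerivAt_id u).const_mul (2 : ℝ)).div (sqrt_hasDerivAt u) hsne)
    have heq : (fun u : ℝ => 2 * u * (Real.sqrt (1 + u ^ 2))⁻¹) =
        fun x : ℝ => 2 * x / Real.sqrt (1 + x ^ 2) := by
      funext x; rw [div_eq_mul_inv]
    rw [heq]
    refine this.congr_deriv ?_
    simp only [id_eq]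
    field_simp
    ring_nf
    nlinarith [hsq, hs]
  have hφmono : Monotone (fun u : ℝ => 2 * u * (Real.sqrt (1 + u ^ 2))⁻¹) := by
    apply monotone_of_deriv_nonneg
    · exact fun u => (hφd u).differentiableAt
    · intro u
      rw [(hφd u).deriv]
      positivity
  -- conclude
  apply Monotone.convexOn_univ_of_deriv
  · exact fun v => (hLd v).differentiableAt
  · have : deriv (fun v : ℝ => f v ^ 2) =
        fun v => 2 * f v * (Real.sqrt (1 + f v ^ 2))⁻¹ := by
      funext v; exact (hLd v).deriv
    rw [this]
    exact fun a b hab => hφmono (hfmono.monotone hab)
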